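/- For s ∈ (√2, 2], the second iterate T_s² restricted to the core [c₂, c₁] is not renormalizable in the following sense: there is no proper subinterval J ⊂ [c₂, c₁] containing c = 1/2 in its interior with T_s²(J) ⊆ J and J ≠ [c₂, c₁]; equivalently, T_s²(J) ⊆ J and c ∈ int(J) imply J ⊇ [c₂, c₁]. (A concrete special case: for s ∈ (√2, 2], the fixed point p = s/(1+s) of T_s satisfies T_s²([1−p, p]) ⊄ [1−p, p] unless [1−p,p] ⊇ [c₂,c₁].) -/

import Mathlib

noncomputable def tent (s x : ℝ) : ℝ := min (s * x) (s * (1 - x))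

lemma tent_left {s x : ℝ} (hs : 0 ≤ s) (hx : x ≤ 1/2) : tent s x = s * x := by
  unfold tent; apply min_eq_left; nlinarith

lemma tent_right {s x : ℝ} (hs : 0 ≤ s) (hx : 1/2 ≤ x) : tent s x = s * (1 - x) := by
  unfold tent; apply min_eq_right; nlinarith

set_option maxHeartbeats 1600000 in
/-- For s ∈ (√2, 2], the tent map is not renormalizable: any subinterval `J` of the core
`[c₂, c₁]` containing `c = 1/2` in its interior and invariant under `T_s²` must be the
whole core. -/
theorem tent_not_renormalizable (s : ℝ) (hs : s ∈ Set.Ioc (Real.sqrt 2) 2)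
    (J : Set ℝ) (hJint : J.OrdConnected)
    (hJsub : J ⊆ Set.Icc (s * (1 - s / 2)) (s / 2))
    (hc : (1:ℝ) / 2 ∈ interior J)
    (hinv : Set.MapsTo (tent s ∘ tent s) J J) :
    Set.Icc (s * (1 - s / 2)) (s / 2) ⊆ J := by
  obtain ⟨hs1, hs2⟩ := hs
  have hs0 : (0:ℝ) < s := lt_of_le_of_lt (Real.sqrt_nonneg 2) hs1
  have hsq : 2 < s^2 := by
    nlinarith [Real.sq_sqrt (show (0:ℝ) ≤ 2 by norm_num), Real.sqrt_nonneg 2]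
  have hs1' : 1 < s := by nlinarith
  have hhalf : (1:ℝ)/2 ∈ J := interior_subset hc
  have t_half : tent s (1/2) = s/2 := by rw [tent_left hs0.le le_rfl]; ring
  have hc1ge : (1:ℝ)/2 ≤ s/2 := by linarith
  have t_c1 : tent s (s/2) = s * (1 - s/2) := tent_right hs0.le hc1ge
  have hc2J : s * (1 - s/2) ∈ J := by
    have h := hinv hhalf
    rwa [Function.comp_apply, t_half, t_c1] at h
  have hc2half : s * (1 - s/2) ≤ 1/2 := by nlinarith
  have hJne : J.Nonempty := ⟨1/2, hhalf⟩
  have hbdd : BddAbove J := BddAbove.mono hJsub bddAbove_Icc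
  have hmem : ∀ x : ℝ, 1/2 ≤ x → x < sSup J → x ∈ J := by
    intro x hx1 hx2
    obtain ⟨z, hzJ, hxz⟩ := exists_lt_of_lt_csSup hJne hx2
    exact hJint.out hhalf hzJ ⟨hx1, hxz.le⟩
  have hc1J : s/2 ∈ J := by
    by_cases hA : s * (s * (1 - s/2)) < 1/2
    · -- the point 1/(2s) lies in [c₂, 1/2] ⊆ J, and T²(1/(2s)) = s/2
      have hx0J : 1/(2*s) ∈ J := by
        apply hJint.out hc2J hhalf
        constructor
        · rw [le_div_iff₀ (by positivity : (0:ℝ) < 2*s)]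
          nlinarith
        · rw [div_le_div_iff₀ (by positivity : (0:ℝ) < 2*s) (by norm_num : (0:ℝ) < 2)]
          nlinarith
      have tx0 : tent s (1/(2*s)) = 1/2 := by
        rw [tent_left hs0.le]
        · field_simp
        · rw [div_le_div_iff₀ (by positivity : (0:ℝ) < 2*s) (by norm_num : (0:ℝ) < 2)]
          nlinarith
      have h := hinv hx0J
      rwa [Function.comp_apply, tx0, t_half] at h
    · push_neg at hA
      -- q := T²(c₂) ∈ J
      have t_c2 : tent s (s * (1 - s/2)) = s * (s * (1 - s/2)) :=
        tent_left hs0.le hc2half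
      have t_next : tent s (s * (s * (1 - s/2))) = s * (1 - s * (s * (1 - s/2))) :=
        tent_right hs0.le hA
      have hqJ : s * (1 - s * (s * (1 - s/2))) ∈ J := by
        have h := hinv hc2J
        rwa [Function.comp_apply, t_c2, t_next] at h
      set q : ℝ := s * (1 - s * (s * (1 - s/2))) with hqdef
      clear_value q
      set b : ℝ := sSup J with hbdef
      clear_value b
      have hqb : q ≤ b := by rw [hbdef]; exact le_csSup hbdd hqJ
      -- q > 1/2, indeed q(s+1) > s
      have hq12 : 1/2 < q := by
        have h3 : (0:ℝ) < (s-1)^3 * (s+1) :=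
          mul_pos (pow_pos (by linarith) 3) (by linarith)
        nlinarith [h3]
      have hq' : s < q * (s+1) := by
        have h3 : (0:ℝ) < s^2/2 * (s-1) * (s^2-2) := by
          apply mul_pos (mul_pos (by positivity) (by linarith)) (by linarith)
        nlinarith [h3]
      have hb2 : 1/2 < b := lt_of_lt_of_le hq12 hqb
      by_cases hbb : b ≤ 1 - 1/(2*s)
      · exfalso
        have key : ∀ x : ℝ, 1/2 ≤ x → x < b → s - s^2 + s^2*x ≤ b := by
          intro x hx1 hx2
          have hxJ : x ∈ J := hmem x hx1 hx2
          have tx : tent s x = s * (1 - x) := tent_right hs0.le hx1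
          have hx3 : x ≤ 1 - 1/(2*s) := hx2.le.trans hbb
          have hge : 1/2 ≤ s * (1 - x) := by
            have h4 : 1/(2*s) ≤ 1 - x := by linarith
            have h5 : s * (1/(2*s)) = 1/2 := by field_simp
            nlinarith [mul_le_mul_of_nonneg_left h4 hs0.le]
          have tx2 : tent s (s * (1 - x)) = s * (1 - s * (1 - x)) :=
            tent_right hs0.le hge
          have hmemJ : s * (1 - s * (1 - x)) ∈ J := by
            have h := hinv hxJ
            rwa [Function.comp_apply, tx, tx2] at h
          calc s - s^2 + s^2*x = s * (1 - s * (1 - x)) := by ring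
            _ ≤ b := by rw [hbdef]; exact le_csSup hbdd hmemJ
        have step : s - s^2 + s^2*b ≤ b := by
          by_contra hcon
          push_neg at hcon
          set D : ℝ := (b - s + s^2)/s^2 with hDdef
          clear_value D
          have hD : D < b := by
            rw [hDdef, div_lt_iff₀ (by positivity : (0:ℝ) < s^2)]
            nlinarith
          have hx := key (max (1/2) ((D+b)/2)) (le_max_left _ _)
            (max_lt hb2 (by linarith))
          have hsD : s^2 * D = b - s + s^2 := by
            rw [hDdef]; field_simp
          have h5 : s^2 * max (1/2) ((D+b)/2) ≤ s^2 * D := by linarith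
          have h6 : max (1/2) ((D+b)/2) ≤ D :=
            le_of_mul_le_mul_left h5 (by positivity)
          have h7 : (D+b)/2 ≤ D := le_trans (le_max_right _ _) h6
          linarith
        -- step gives b(s+1)(s-1) ≤ s(s-1), hence b(s+1) ≤ s, contradicting q(s+1) > s
        have h9 : (b*(s+1)) * (s-1) ≤ s * (s-1) := by nlinarith [step]
        have h10 : b*(s+1) ≤ s :=
          le_of_mul_le_mul_right h9 (by linarith)
        have h11 : q*(s+1) ≤ b*(s+1) :=
          mul_le_mul_of_nonneg_right hqb (by linarith)
        linarith
      · push_neg at hbb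
        have hx1 : (1:ℝ)/2 ≤ 1 - 1/(2*s) := by
          have : 1/(2*s) ≤ 1/2 := by
            rw [div_le_div_iff₀ (by positivity : (0:ℝ) < 2*s) (by norm_num : (0:ℝ) < 2)]
            linarith
          linarith
        have hxJ : 1 - 1/(2*s) ∈ J := hmem _ hx1 hbb
        have tx : tent s (1 - 1/(2*s)) = 1/2 := by
          rw [tent_right hs0.le hx1]
          field_simp
          ring
        have h := hinv hxJ
        rwa [Function.comp_apply, tx, t_half] at h
  intro x hx
  exact hJint.out hc2J hc1J hx
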